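/- If x* ≥ L_x, then for every q ≥ 0 the miner's profit from executing Sell(X,q) at state (x*, F_y(x*)) is nonpositive: (F_y(x*) − F_y(x*+(1−f)q))·p_y − q·p_x ≤ 0. -/

import Mathlib

/-- If `x* ≥ L_x`, then for every `q ≥ 0` the miner's profit from executing `Sell(X,q)` at state
`(x*, F_y(x*))` is nonpositive: `(F_y(x*) − F_y(x*+(1−f)q))·p_y − q·p_x ≤ 0`.

The CFMM is given by a differentiable, strictly decreasing reserve curve `Fy` on `(0,∞)`,
with marginal exchange rate `r x = −Fy′ x` positive and strictly decreasing there;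
`p_x, p_y > 0` are the exogenous prices, `f ∈ [0,1)` the fee fraction, and `L_x` the unique
point with `r L_x = (1/(1−f))·(p_x/p_y)`. -/
theorem sellX_profit_nonpos_of_ge_Lx
    (Fy : ℝ → ℝ) (f px py Lx xstar q : ℝ)
    (hf0 : 0 ≤ f) (hf1 : f < 1)
    (hpx : 0 < px) (hpy : 0 < py)
    (hFy_diff : ∀ x ∈ Set.Ioi (0 : ℝ), DifferentiableAt ℝ Fy x)
    (hFy_anti : StrictAntiOn Fy (Set.Ioi 0))
    (hr_pos : ∀ x ∈ Set.Ioi (0 : ℝ), 0 < -deriv Fy x)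
    (hr_anti : StrictAntiOn (fun x => -deriv Fy x) (Set.Ioi 0))
    (hLx_pos : 0 < Lx)
    (hLx : -deriv Fy Lx = (1 / (1 - f)) * (px / py))
    (hxstar : Lx ≤ xstar)
    (hq : 0 ≤ q) :
    (Fy xstar - Fy (xstar + (1 - f) * q)) * py - q * px ≤ 0 := by
  have hf : (0:ℝ) < 1 - f := by linarith
  set C : ℝ := (1 / (1 - f)) * (px / py) with hC
  set h : ℝ → ℝ := fun x => Fy x + C * x with hhdef
  -- h is monotone on Ici Lx
  have hcont : ContinuousOn h (Set.Ici Lx) := by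
    intro x hx
    have hx0 : x ∈ Set.Ioi (0:ℝ) := lt_of_lt_of_le hLx_pos hx
    exact (((hFy_diff x hx0).add ((differentiableAt_fun_id).const_mul C)).continuousAt).continuousWithinAt
  have hderiv : ∀ x ∈ interior (Set.Ici Lx), 0 < deriv h x := by
    intro x hx
    rw [interior_Ici] at hx
    have hx0 : x ∈ Set.Ioi (0:ℝ) := lt_trans hLx_pos hx
    have hd : deriv h x = deriv Fy x + C := by
      rw [hhdef]
      rw [deriv_fun_add (hFy_diff x hx0) ((differentiableAt_fun_id).const_mul C)]
      rw [deriv_const_mul _ differentiableAt_fun_id, deriv_id'', mul_one]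
    have hlt : -deriv Fy x < -deriv Fy Lx :=
      hr_anti (Set.mem_Ioi.mpr hLx_pos) hx0 hx
    rw [hLx] at hlt
    rw [hd]; linarith [hlt]
  have hmono : StrictMonoOn h (Set.Ici Lx) :=
    strictMonoOn_of_deriv_pos (convex_Ici Lx) hcont hderiv
  set x2 : ℝ := xstar + (1 - f) * q with hx2
  have hle : xstar ≤ x2 := by
    have : 0 ≤ (1 - f) * q := mul_nonneg (le_of_lt hf) hq
    linarith
  have hkey : h xstar ≤ h x2 := by
    rcases eq_or_lt_of_le hle with heq | hlt
    · rw [heq]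
    · exact le_of_lt (hmono (Set.mem_Ici.mpr hxstar) (Set.mem_Ici.mpr (le_trans hxstar hle)) hlt)
  have hdiff : Fy xstar - Fy x2 ≤ C * (x2 - xstar) := by
    have : Fy xstar + C * xstar ≤ Fy x2 + C * x2 := hkey
    nlinarith
  have hCval : C * (x2 - xstar) = q * px / py := by
    rw [hx2, hC]
    field_simp
    ring
  have : Fy xstar - Fy x2 ≤ q * px / py := hCval ▸ hdiff
  have := mul_le_mul_of_nonneg_right this (le_of_lt hpy)
  rw [div_mul_cancel₀ _ (ne_of_gt hpy)] at this
  linarith
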